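/- arXiv:1109.0748 — 10 statements merged into one kernel-verified Lean document; each statement's English description precedes it below -/
import Mathlib

section
/- Let n be a positive integer and let a : ZMod (4n) → ℤ take only the values 1 and −1, such that the circulant matrix H with H i j = a (j − i) satisfies H * Hᵀ = (4n : ℤ) • 1. Let r be the number of indices i : ZMod (4n) with a i = −1. Then (2n − r)² = n; equivalently, there exists a natural number u with n = u² and either r = 2n + u or r = 2n − u. -/
open Matrix Finset

/-- If `H i j = a (j - i)` is a circulant Hadamard matrix of order `4n` with entries `±1`,
and `r` is the number of `-1` entries in the generating vector (hence in each row and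
column), then `(2n - r)² = n`; equivalently `n = u²` is a perfect square and
`r = 2n + u` or `r = 2n - u`. -/
theorem circulant_hadamard_count_neg_ones
    (n : ℕ) [NeZero n] (a : ZMod (4 * n) → ℤ)
    (ha : ∀ i, a i = 1 ∨ a i = -1)
    (H : Matrix (ZMod (4 * n)) (ZMod (4 * n)) ℤ)
    (hH : ∀ i j, H i j = a (j - i))
    (hHad : H * H.transpose = ((4 * n : ℕ) : ℤ) • 1)
    (r : ℕ) (hr : r = (Finset.univ.filter fun i => a i = -1).card) :
    ((2 * n : ℤ) - r) ^ 2 = n ∧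
      ∃ u : ℕ, n = u ^ 2 ∧ (r = 2 * n + u ∨ r = 2 * n - u) := by
  haveI : NeZero (4 * n) := ⟨by have := NeZero.ne n; omega⟩
  set s : ℤ := ∑ i, a i with hs
  have hcard : Fintype.card (ZMod (4 * n)) = 4 * n := ZMod.card _
  -- column sums are all s
  have hcol : ∀ k : ZMod (4 * n), (∑ i, H i k) = s := by
    intro k
    simp only [hH, hs]
    exact Fintype.sum_equiv (Equiv.subLeft k) _ _ (fun i => rfl)
  -- sum all entries of both sides of hHad
  have hsum : ∑ k : ZMod (4 * n), s * s = ∑ i : ZMod (4 * n), ((4 * n : ℕ) : ℤ) := by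
    have := congrArg (fun M : Matrix (ZMod (4 * n)) (ZMod (4 * n)) ℤ => ∑ i, ∑ j, M i j) hHad
    simp only [Matrix.mul_apply, Matrix.transpose_apply, Matrix.smul_apply, Matrix.one_apply,
      smul_eq_mul, mul_ite, mul_one, mul_zero] at this
    calc ∑ k : ZMod (4 * n), s * s
        = ∑ k : ZMod (4 * n), (∑ i, H i k) * (∑ j, H j k) := by
          simp [hcol]
      _ = ∑ k : ZMod (4 * n), ∑ i, ∑ j, H i k * H j k := by
          refine Finset.sum_congr rfl fun k _ => Finset.sum_mul_sum _ _ _ _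
      _ = ∑ i, ∑ j, ∑ k, H i k * H j k := by
          rw [Finset.sum_comm]
          exact Finset.sum_congr rfl fun i _ => Finset.sum_comm
      _ = ∑ i : ZMod (4 * n), ((4 * n : ℕ) : ℤ) := by
          rw [this]; simp
  have hs2 : s ^ 2 = 4 * n := by
    simp only [Finset.sum_const, Finset.card_univ, hcard, nsmul_eq_mul] at hsum
    have h4 : ((4 * n : ℕ) : ℤ) ≠ 0 := by
      have := NeZero.ne n; exact_mod_cast (by omega : (4 * n : ℕ) ≠ 0)
    have := mul_left_cancel₀ h4 hsum
    push_cast at this ⊢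
    nlinarith [this]
  -- compute s in terms of r
  have hsr : s = 4 * n - 2 * r := by
    rw [hs, ← Finset.sum_filter_add_sum_filter_not Finset.univ (fun i => a i = -1)]
    have h1 : ∑ i ∈ Finset.univ.filter (fun i => a i = -1), a i = -(r : ℤ) := by
      rw [Finset.sum_congr rfl (fun i hi => (Finset.mem_filter.mp hi).2), Finset.sum_const,
        hr]; simp
    have h2 : ∑ i ∈ Finset.univ.filter (fun i => ¬ a i = -1), a i
        = ((4 * n - r : ℕ) : ℤ) := by
      rw [Finset.sum_congr rfl (fun i hi => ((ha i).resolve_right (Finset.mem_filter.mp hi).2)),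
        Finset.sum_const]
      have := Finset.card_filter_add_card_filter_not (s := (Finset.univ : Finset (ZMod (4 * n)))) (p := fun i => a i = -1)
      rw [Finset.card_univ, hcard] at this
      simp only [nsmul_eq_mul, mul_one]
      congr 1
      omega
    rw [h1, h2]
    have hrle : r ≤ 4 * n := by
      rw [hr]
      calc (Finset.univ.filter fun i => a i = -1).card ≤ Finset.univ.card :=
            Finset.card_filter_le _ _
        _ = 4 * n := by rw [Finset.card_univ, hcard]
    push_cast [hrle]
    ring
  have key : ((2 * n : ℤ) - r) ^ 2 = n := by nlinarith [hs2, hsr]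
  refine ⟨key, ((2 * n : ℤ) - r).natAbs, ?_, ?_⟩
  · have : (((2 * n : ℤ) - r).natAbs : ℤ) ^ 2 = n := by
      calc (((2 * n : ℤ) - r).natAbs : ℤ) ^ 2 = |(2 * n : ℤ) - r| ^ 2 := by
            rw [Int.abs_eq_natAbs]
        _ = ((2 * n : ℤ) - r) ^ 2 := sq_abs _
        _ = n := key
    exact_mod_cast this.symm
  · rcases Int.natAbs_eq ((2 * n : ℤ) - r) with h | h <;> omega
end

section
/- Let n be a positive integer. If there exists a : ZMod (4n) → ℤ taking only the values 1 and −1 such that the circulant matrix H with H i j = a (j − i) satisfies H * Hᵀ = (4n : ℤ) • 1, then n is a perfect square, i.e., there exists a natural number u with n = u². -/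
open Matrix

/-- If a circulant Hadamard matrix of order `4n` exists, then `n` is a perfect square. -/
theorem circulant_hadamard_isSquare
    (n : ℕ) [NeZero n]
    (h : ∃ a : ZMod (4 * n) → ℤ, (∀ i, a i = 1 ∨ a i = -1) ∧
      ∃ H : Matrix (ZMod (4 * n)) (ZMod (4 * n)) ℤ,
        (∀ i j, H i j = a (j - i)) ∧ H * H.transpose = ((4 * n : ℕ) : ℤ) • 1) :
    ∃ u : ℕ, n = u ^ 2 := by
  haveI : NeZero (4 * n) := ⟨by have := NeZero.ne n; omega⟩
  obtain ⟨a, hpm, H, hH, hHH⟩ := h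
  set s : ℤ := ∑ i : ZMod (4 * n), a i with hs
  -- each column sum equals s
  have hcol : ∀ k : ZMod (4 * n), (∑ j : ZMod (4 * n), a (k - j)) = s := by
    intro k
    exact Fintype.sum_equiv (Equiv.subLeft k) _ _ (fun j => rfl)
  -- sum of row 0 of H * Hᵀ two ways
  have key : s * s = (4 * n : ℕ) := by
    have h1 : (∑ j : ZMod (4 * n), (H * H.transpose) 0 j) = s * s := by
      simp only [mul_apply, transpose_apply]
      rw [Finset.sum_comm]
      calc (∑ k : ZMod (4 * n), ∑ j : ZMod (4 * n), H 0 k * H j k)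
          = ∑ k : ZMod (4 * n), a k * s := by
            refine Finset.sum_congr rfl fun k _ => ?_
            rw [← Finset.mul_sum]
            congr 1
            · rw [hH]; congr 1; simp
            · rw [← hcol k]
              exact Finset.sum_congr rfl fun j _ => by rw [hH]
        _ = s * s := by rw [← Finset.sum_mul]
    have h2 : (∑ j : ZMod (4 * n), (H * H.transpose) 0 j) = (4 * n : ℕ) := by
      rw [hHH]
      simp [Matrix.smul_apply, Matrix.one_apply, Finset.sum_ite_eq]
    rw [← h1, h2]
  -- s is even
  have h4 : (4 : ℤ) ∣ s * s := ⟨n, by rw [key]; push_cast; ring⟩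
  have hev : (2 : ℤ) ∣ s := by
    rcases Int.even_or_odd s with he | ho
    · exact he.two_dvd
    · exfalso
      have hodd : Odd (s * s) := ho.mul ho
      obtain ⟨k, hk⟩ := hodd
      obtain ⟨m, hm⟩ := h4
      omega
  obtain ⟨t, ht⟩ := hev
  refine ⟨t.natAbs, ?_⟩
  have : (n : ℤ) = t ^ 2 := by
    have k2 := key
    rw [ht] at k2
    push_cast at k2
    linarith [k2]
  have := this
  zify
  rw [this, sq_abs]
end

section
/- Let m be a positive integer. If there exists a : ZMod m → ℤ taking only the values 1 and −1 such that the circulant matrix H with H i j = a (j − i) satisfies H * Hᵀ = (m : ℤ) • 1, then m = 1 or there exists a positive natural number u with m = 4u². -/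
open Matrix

/-- A circulant Hadamard matrix of order `m` forces `m = 1` or `m = 4u²` for some `u > 0`. -/
theorem circulant_hadamard_order_eq_one_or_four_mul_sq
    (m : ℕ) [NeZero m]
    (h : ∃ a : ZMod m → ℤ, (∀ i, a i = 1 ∨ a i = -1) ∧
      ∃ H : Matrix (ZMod m) (ZMod m) ℤ,
        (∀ i j, H i j = a (j - i)) ∧ H * H.transpose = (m : ℤ) • 1) :
    m = 1 ∨ ∃ u : ℕ, 0 < u ∧ m = 4 * u ^ 2 := by
  obtain ⟨a, ha, H, hH, horth⟩ := h
  -- parity lemma: a sum of m terms each equal to ±1 is congruent to m mod 2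
  have key : ∀ f : ZMod m → ℤ, (∀ k, f k = 1 ∨ f k = -1) →
      (2 : ℤ) ∣ (∑ k, f k) - m := by
    intro f hf
    have h1 : (∑ k, f k) - (m : ℤ) = ∑ k : ZMod m, (f k - 1) := by
      rw [Finset.sum_sub_distrib]
      simp [Finset.card_univ, ZMod.card]
    rw [h1]
    apply Finset.dvd_sum
    intro k _
    rcases hf k with h | h <;> simp [h]
  -- entrywise orthogonality
  have hent : ∀ i j : ZMod m, (∑ k, H i k * H j k) = if i = j then (m : ℤ) else 0 := by
    intro i j
    have := Matrix.ext_iff.mpr horth i j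
    simpa [Matrix.mul_apply, Matrix.transpose_apply, Matrix.smul_apply,
      Matrix.one_apply, mul_ite] using this
  by_cases hm1 : m = 1
  · exact Or.inl hm1
  right
  have hm1' : 1 < m := lt_of_le_of_ne (Nat.one_le_iff_ne_zero.2 (NeZero.ne m)) (Ne.symm hm1)
  -- m must be even
  have hmeven : Even m := by
    by_contra hodd
    haveI : Fact (1 < m) := ⟨hm1'⟩
    have hne : (0 : ZMod m) ≠ 1 := zero_ne_one
    have h0 : (∑ k, H 0 k * H 1 k) = 0 := by rw [hent 0 1, if_neg hne]
    have hpm : ∀ k : ZMod m, H 0 k * H 1 k = 1 ∨ H 0 k * H 1 k = -1 := by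
      intro k
      rcases ha k with h1 | h1 <;> rcases ha (k - 1) with h2 | h2 <;>
        simp [hH, sub_zero, h1, h2]
    have hk := key _ hpm
    rw [h0] at hk
    have h2m : (2 : ℤ) ∣ (m : ℤ) := by omega
    have : 2 ∣ m := by exact_mod_cast h2m
    exact hodd (even_iff_two_dvd.2 this)
  -- row sums
  set s : ℤ := ∑ k : ZMod m, a k with hs
  have hrow : ∀ k : ZMod m, (∑ i : ZMod m, H i k) = s := by
    intro k
    rw [hs]
    refine Fintype.sum_equiv (Equiv.subLeft k) _ _ ?_
    intro i
    simp [hH, Equiv.subLeft]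
  -- total sum gives m * s^2 = m * m
  have htot : (m : ℤ) * s ^ 2 = (m : ℤ) * m := by
    have lhs : (∑ k : ZMod m, ∑ i : ZMod m, ∑ j : ZMod m, H i k * H j k)
        = (m : ℤ) * s ^ 2 := by
      have : ∀ k : ZMod m, (∑ i : ZMod m, ∑ j : ZMod m, H i k * H j k) = s ^ 2 := by
        intro k
        rw [← Finset.sum_mul_sum, hrow k, sq]
      simp [this, Finset.card_univ, ZMod.card]
    have rhs : (∑ i : ZMod m, ∑ j : ZMod m, ∑ k : ZMod m, H i k * H j k)
        = (m : ℤ) * m := by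
      simp [hent, Finset.card_univ, ZMod.card]
    rw [← lhs, ← rhs]
    rw [Finset.sum_comm]
    congr 1
    ext i
    rw [Finset.sum_comm]
  have hm0 : (m : ℤ) ≠ 0 := by exact_mod_cast NeZero.ne m
  have hsq : s ^ 2 = m := mul_left_cancel₀ hm0 htot
  -- s is even
  have hseven : (2 : ℤ) ∣ s := by
    have h2m : (2 : ℤ) ∣ m := by
      exact_mod_cast even_iff_two_dvd.1 hmeven
    have := key a ha
    omega
  obtain ⟨t, ht⟩ := hseven
  refine ⟨t.natAbs, ?_, ?_⟩
  · rcases Nat.eq_zero_or_pos t.natAbs with h0 | h0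
    · exfalso
      have : t = 0 := Int.natAbs_eq_zero.mp h0
      rw [this, mul_zero] at ht
      rw [ht] at hsq
      simp at hsq
      exact hm0 (by exact_mod_cast hsq.symm)
    · exact h0
  · have : (m : ℤ) = 4 * (t.natAbs : ℤ) ^ 2 := by
      have habs : ((t.natAbs : ℤ)) * (t.natAbs : ℤ) = t * t := Int.natAbs_mul_self' t
      rw [← hsq, ht]
      nlinarith [habs]
    exact_mod_cast this
end

section
/- Let m be a positive integer and let A be an m×m matrix over ℤ with all entries in {1, −1}, whose rows are pairwise orthogonal (A * Aᵀ = (m : ℤ) • 1). Suppose there is a natural number r such that every row of A contains exactly r entries equal to −1 and every column of A contains exactly r entries equal to −1. Then (m − 2r)² = m; in particular m is a perfect square and 2r = m + √m or 2r = m − √m. -/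
open Matrix Finset

/-- Lemma (regular `±1` matrix with orthogonal rows): if every row and every column of
an `m × m` matrix `A` with entries `±1` and `A * Aᵀ = m • 1` contains exactly `r`
entries equal to `-1`, then `(m - 2r)² = m`; in particular `m = u²` is a perfect
square and `2r = m + u` or `2r = m - u`. -/
theorem regular_pm_one_orthogonal_rows_count
    (m : ℕ) (hm : 0 < m)
    (A : Matrix (Fin m) (Fin m) ℤ)
    (hA : ∀ i j, A i j = 1 ∨ A i j = -1)
    (hOrth : A * A.transpose = (m : ℤ) • 1)
    (r : ℕ)
    (hrow : ∀ i, (Finset.univ.filter fun j => A i j = -1).card = r)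
    (hcol : ∀ j, (Finset.univ.filter fun i => A i j = -1).card = r) :
    ((m : ℤ) - 2 * r) ^ 2 = m ∧
      ∃ u : ℕ, m = u ^ 2 ∧ (2 * r = m + u ∨ 2 * r = m - u) := by
  have colsum : ∀ j, ∑ i, A i j = (m : ℤ) - 2 * r := by
    intro j
    have hsplit := Finset.sum_filter_add_sum_filter_not
      (Finset.univ : Finset (Fin m)) (fun i => A i j = -1) (fun i => A i j)
    have h1 : ∑ i ∈ Finset.univ.filter (fun i => A i j = -1), A i j = -(r : ℤ) := by
      rw [Finset.sum_congr rfl (fun i hi => (Finset.mem_filter.mp hi).2)]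
      simp [hcol j]
    have hc := Finset.card_filter_add_card_filter_not
      (s := (Finset.univ : Finset (Fin m))) (p := fun i => A i j = -1)
    rw [hcol j, Finset.card_univ, Fintype.card_fin] at hc
    have h2 : ∑ i ∈ Finset.univ.filter (fun i => ¬ A i j = -1), A i j
        = ((m - r : ℕ) : ℤ) := by
      have hall : ∀ i ∈ Finset.univ.filter (fun i => ¬ A i j = -1), A i j = 1 := by
        intro i hi
        rcases hA i j with h | h
        · exact h
        · exact absurd h (Finset.mem_filter.mp hi).2
      rw [Finset.sum_congr rfl hall, Finset.sum_const, nsmul_eq_mul, mul_one]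
      have : (Finset.univ.filter (fun i => ¬ A i j = -1)).card = m - r := by omega
      rw [this]
    rw [h1, h2] at hsplit
    have hrm : r ≤ m := by omega
    rw [← hsplit]
    push_cast [Nat.cast_sub hrm]
    ring
  have key : (m : ℤ) * ((m : ℤ) - 2 * r) ^ 2 = (m : ℤ) * m := by
    have hsum := congrArg (fun M : Matrix (Fin m) (Fin m) ℤ => ∑ i, ∑ k, M i k) hOrth
    simp only [Matrix.mul_apply, Matrix.smul_apply, Matrix.one_apply, smul_eq_mul,
      Matrix.transpose_apply, mul_ite, mul_one, mul_zero, Finset.sum_ite_eq,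
      Finset.mem_univ, if_true] at hsum
    have lhs : ∑ i, ∑ k, ∑ j, A i j * A k j = (m : ℤ) * ((m : ℤ) - 2 * r) ^ 2 := by
      have step1 : ∀ i : Fin m, ∑ k, ∑ j, A i j * A k j
          = ∑ j, A i j * ((m : ℤ) - 2 * r) := by
        intro i
        rw [Finset.sum_comm]
        refine Finset.sum_congr rfl fun j _ => ?_
        rw [← Finset.mul_sum, colsum j]
      calc ∑ i, ∑ k, ∑ j, A i j * A k j
          = ∑ i, ∑ j, A i j * ((m : ℤ) - 2 * r) := Finset.sum_congr rfl fun i _ => step1 i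
        _ = ∑ j, (∑ i, A i j) * ((m : ℤ) - 2 * r) := by
            rw [Finset.sum_comm]
            exact Finset.sum_congr rfl fun j _ => (Finset.sum_mul ..).symm
        _ = ∑ j : Fin m, ((m : ℤ) - 2 * r) * ((m : ℤ) - 2 * r) := by
            refine Finset.sum_congr rfl fun j _ => by rw [colsum j]
        _ = (m : ℤ) * ((m : ℤ) - 2 * r) ^ 2 := by
            rw [Finset.sum_const, Finset.card_univ, Fintype.card_fin, nsmul_eq_mul]
            ring
    rw [lhs] at hsum
    simpa using hsum
  have hsq : ((m : ℤ) - 2 * r) ^ 2 = m := by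
    have hm0 : (m : ℤ) ≠ 0 := by exact_mod_cast hm.ne'
    exact mul_left_cancel₀ hm0 key
  refine ⟨hsq, ((m : ℤ) - 2 * r).natAbs, ?_, ?_⟩
  · have := congrArg Int.natAbs hsq
    rw [Int.natAbs_pow] at this
    simpa using this.symm
  · rcases le_or_gt 0 ((m : ℤ) - 2 * r) with h | h
    · right
      have : (((m : ℤ) - 2 * r).natAbs : ℤ) = (m : ℤ) - 2 * r := Int.natAbs_of_nonneg h
      omega
    · left
      have : (((m : ℤ) - 2 * r).natAbs : ℤ) = -((m : ℤ) - 2 * r) :=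
        Int.ofNat_natAbs_of_nonpos h.le
      omega
end

section
/- Let n be a positive integer and let a : ZMod (4n) → ℤ take only the values 1 and −1, such that the circulant matrix H with H i j = a (j − i) satisfies H * Hᵀ = (4n : ℤ) • 1. Define v : ZMod (4n) → ℤ by v i = a i − a (i + 2n). Then for every t : ZMod (4n) with t ≠ 0 and t ≠ 2n, the sum over i : ZMod (4n) of v i * v (i + t) equals 0. -/
open Matrix Finset

/-- For a circulant Hadamard matrix of order `4n`, the odd-block function
`v i = a i - a (i + 2n)` satisfies `∑ i, v i * v (i + t) = 0` for every
`t ≠ 0`, `t ≠ 2n`. -/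
theorem circulant_hadamard_odd_block_autocorrelation
    (n : ℕ) [NeZero n] (a : ZMod (4 * n) → ℤ)
    (ha : ∀ i, a i = 1 ∨ a i = -1)
    (H : Matrix (ZMod (4 * n)) (ZMod (4 * n)) ℤ)
    (hH : ∀ i j, H i j = a (j - i))
    (hHad : H * H.transpose = ((4 * n : ℕ) : ℤ) • 1)
    (v : ZMod (4 * n) → ℤ)
    (hv : ∀ i, v i = a i - a (i + 2 * n)) :
    ∀ t : ZMod (4 * n), t ≠ 0 → t ≠ (2 * n : ZMod (4 * n)) →
      ∑ i : ZMod (4 * n), v i * v (i + t) = 0 := by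
  intro t ht ht2
  set c : ZMod (4 * n) := (2 * n : ZMod (4 * n)) with hc
  have h2 : c + c = 0 := by
    have h4 : ((4 * n : ℕ) : ZMod (4 * n)) = 0 := ZMod.natCast_self _
    push_cast at h4
    rw [hc]
    linear_combination h4
  -- autocorrelation of a vanishes at nonzero shifts
  have hC : ∀ s : ZMod (4 * n), s ≠ 0 → ∑ i : ZMod (4 * n), a i * a (i + s) = 0 := by
    intro s hs
    have h := congrFun (congrFun hHad 0) (-s)
    rw [Matrix.mul_apply] at h
    simp only [Matrix.transpose_apply, hH] at h
    rw [Matrix.smul_apply, Matrix.one_apply_ne (by simpa using hs)] at h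
    simp only [sub_zero, sub_neg_eq_add, smul_eq_mul, mul_zero] at h
    exact h
  have hshift : ∀ (d : ZMod (4 * n)) (f : ZMod (4 * n) → ℤ),
      ∑ i : ZMod (4 * n), f (i + d) = ∑ i : ZMod (4 * n), f i :=
    fun d f => Fintype.sum_equiv (Equiv.addRight d) _ _ (fun i => rfl)
  have htc : t + c ≠ 0 := by
    intro h
    apply ht2
    have : t = -c := by linear_combination h
    rw [this, hc]
    linear_combination -h2
  have hsum : ∑ i : ZMod (4 * n), v i * v (i + t)
      = (∑ i : ZMod (4 * n), a i * a (i + t))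
        - (∑ i : ZMod (4 * n), a i * a (i + (t + c)))
        - (∑ i : ZMod (4 * n), a (i + c) * a ((i + c) + (t + c)))
        + (∑ i : ZMod (4 * n), a (i + c) * a ((i + c) + t)) := by
    rw [← Finset.sum_sub_distrib, ← Finset.sum_sub_distrib, ← Finset.sum_add_distrib]
    refine Finset.sum_congr rfl fun i _ => ?_
    rw [hv i, hv (i + t)]
    rw [show i + (t + c) = i + t + c from (add_assoc i t c).symm,
      show (i + c) + (t + c) = i + t from by linear_combination h2,
      show (i + c) + t = i + t + c from by ring]
    ring
  rw [hsum,
    hshift c (fun j => a j * a (j + (t + c))),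
    hshift c (fun j => a j * a (j + t)),
    hC t ht, hC (t + c) htc]
  ring
end

section
/- Let n be a positive integer and let a : ZMod (4n) → ℤ take only the values 1 and −1, such that the circulant matrix H with H i j = a (j − i) satisfies H * Hᵀ = (4n : ℤ) • 1. Define u : ZMod (4n) → ℤ by u i = a i + a (i + 2n). Then for every t : ZMod (4n) with t ≠ 0 and t ≠ 2n, the sum over i : ZMod (4n) of u i * u (i + t) equals 0. -/
open Matrix Finset

/-- For a circulant Hadamard matrix of order `4n`, the even-block function
`u i = a i + a (i + 2n)` satisfies `∑ i, u i * u (i + t) = 0` for every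
`t ≠ 0`, `t ≠ 2n`. -/
theorem circulant_hadamard_even_block_autocorrelation
    (n : ℕ) [NeZero n] (a : ZMod (4 * n) → ℤ)
    (ha : ∀ i, a i = 1 ∨ a i = -1)
    (H : Matrix (ZMod (4 * n)) (ZMod (4 * n)) ℤ)
    (hH : ∀ i j, H i j = a (j - i))
    (hHad : H * H.transpose = ((4 * n : ℕ) : ℤ) • 1)
    (u : ZMod (4 * n) → ℤ)
    (hu : ∀ i, u i = a i + a (i + 2 * n)) :
    ∀ t : ZMod (4 * n), t ≠ 0 → t ≠ (2 * n : ZMod (4 * n)) →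
      ∑ i : ZMod (4 * n), u i * u (i + t) = 0 := by
  intro t ht ht2
  have h2n : (2 * n : ZMod (4 * n)) + (2 * n : ZMod (4 * n)) = 0 := by
    have : ((2 * n + 2 * n : ℕ) : ZMod (4 * n)) = 0 := by
      rw [show 2 * n + 2 * n = 4 * n by ring]
      exact ZMod.natCast_self _
    push_cast at this
    exact this
  -- autocorrelation of a vanishes at nonzero shifts
  have corr : ∀ s : ZMod (4 * n), s ≠ 0 → ∑ k, a k * a (k + s) = 0 := by
    intro s hs
    have h := congrFun (congrFun hHad 0) (-s)
    rw [Matrix.mul_apply] at h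
    simp only [Matrix.transpose_apply, hH, Matrix.smul_apply, Matrix.one_apply,
      sub_zero, sub_neg_eq_add] at h
    rw [if_neg (by simpa using hs)] at h
    simpa using h
  have hshift : ∀ f : ZMod (4 * n) → ℤ,
      ∑ i : ZMod (4 * n), f (i + 2 * n) = ∑ i : ZMod (4 * n), f i := by
    intro f
    exact Fintype.sum_equiv (Equiv.addRight (2 * n : ZMod (4 * n))) _ _ (fun i => rfl)
  have ht2' : t + 2 * n ≠ 0 := by
    intro h
    apply ht2
    have := congrArg (· + (2 * n : ZMod (4 * n))) h
    simp only [add_assoc, h2n, add_zero, zero_add] at this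
    exact this
  have T1 : ∑ i : ZMod (4 * n), a (i + 2 * n) * a (i + t)
      = ∑ i : ZMod (4 * n), a i * a (i + (t + 2 * n)) := by
    rw [← hshift (fun j => a j * a (j + (t + 2 * n)))]
    apply Finset.sum_congr rfl
    intro i _
    congr 2
    have : i + 2 * (n : ZMod (4 * n)) + (t + 2 * n) = (i + t) + (2 * n + 2 * n) := by ring
    rw [this, h2n, add_zero]
  have T2 : ∑ i : ZMod (4 * n), a (i + 2 * n) * a (i + (t + 2 * n))
      = ∑ i : ZMod (4 * n), a i * a (i + t) := by
    rw [← hshift (fun j => a j * a (j + t))]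
    apply Finset.sum_congr rfl
    intro i _
    congr 2
    ring
  have expand : ∑ i : ZMod (4 * n), u i * u (i + t)
      = ∑ i : ZMod (4 * n), (a i * a (i + t) + a i * a (i + (t + 2 * n))
        + a (i + 2 * n) * a (i + t) + a (i + 2 * n) * a (i + (t + 2 * n))) := by
    apply Finset.sum_congr rfl
    intro i _
    rw [hu, hu, ← add_assoc]
    ring
  rw [expand]
  simp only [Finset.sum_add_distrib, T1, T2, corr t ht, corr (t + 2 * n) ht2']
  ring
end

section
/- Let n be a positive integer and let a : ZMod (4n) → ℤ take only the values 1 and −1, such that the circulant matrix H with H i j = a (j − i) satisfies H * Hᵀ = (4n : ℤ) • 1. Then for every t : ZMod (4n) with t ≠ 0 and t ≠ 2n, the cardinality of the set { i : ZMod (4n) | a i ≠ a (i + 2n) ∧ a (i + t) ≠ a (i + t + 2n) } is divisible by 4. -/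
open Matrix Finset

lemma even_card_of_invol {α : Type*} [DecidableEq α] (f : α → α) :
    ∀ s : Finset α, (∀ x ∈ s, f x ∈ s) → (∀ x ∈ s, f (f x) = x) → (∀ x ∈ s, f x ≠ x) →
      Even s.card := by
  intro s
  induction s using Finset.strongInduction with
  | _ s ih =>
    intro h1 h2 h3
    rcases s.eq_empty_or_nonempty with rfl | ⟨x, hx⟩
    · simp
    · have hfx : f x ∈ s := h1 x hx
      have hfxne : f x ≠ x := h3 x hx
      set t := (s.erase x).erase (f x) with ht
      have hxe : f x ∈ s.erase x := Finset.mem_erase.mpr ⟨hfxne, hfx⟩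
      have hsub : t ⊂ s :=
        (Finset.erase_subset _ _).trans_ssubset (Finset.erase_ssubset hx)
      have hmem : ∀ y, y ∈ t ↔ y ∈ s ∧ y ≠ x ∧ y ≠ f x := by
        intro y
        simp only [ht, Finset.mem_erase]
        tauto
      have hcard : s.card = t.card + 2 := by
        rw [ht, Finset.card_erase_of_mem hxe, Finset.card_erase_of_mem hx]
        have : 2 ≤ s.card := Finset.one_lt_card.mpr ⟨x, hx, f x, hfx, fun h => hfxne h.symm⟩
        omega
      have hEt : Even t.card := by
        refine ih t hsub ?_ ?_ ?_
        · intro y hy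
          obtain ⟨hys, hyx, hyfx⟩ := (hmem y).mp hy
          refine (hmem (f y)).mpr ⟨h1 y hys, ?_, ?_⟩
          · intro h; exact hyfx (by rw [← h2 y hys, h])
          · intro h
            have h' : f (f y) = f (f x) := by rw [h]
            rw [h2 y hys, h2 x hx] at h'
            exact hyx h'
        · intro y hy; exact h2 y ((hmem y).mp hy).1
        · intro y hy; exact h3 y ((hmem y).mp hy).1
      rw [hcard]
      exact hEt.add (by norm_num)

lemma quad_eval (x y z w : ℤ) (hx : x = 1 ∨ x = -1) (hy : y = 1 ∨ y = -1)
    (hz : z = 1 ∨ z = -1) (hw : w = 1 ∨ w = -1) :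
    (x - y) * (z - w) = if x ≠ y ∧ z ≠ w then 4 * (x * z) else 0 := by
  rcases hx with rfl | rfl <;> rcases hy with rfl | rfl <;>
    rcases hz with rfl | rfl <;> rcases hw with rfl | rfl <;> norm_num

lemma neg_of_ne_pm {x y : ℤ} (hx : x = 1 ∨ x = -1) (hy : y = 1 ∨ y = -1) (h : x ≠ y) :
    y = -x := by
  rcases hx with rfl | rfl <;> rcases hy with rfl | rfl <;> simp_all

/-- For a circulant Hadamard matrix of order `4n`, every difference `t ≠ 0, 2n`
between odd blocks occurs a number of times divisible by `4` (counted over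
`ZMod (4n)`, where each block is represented twice). -/
theorem circulant_hadamard_odd_block_differences
    (n : ℕ) [NeZero n] (a : ZMod (4 * n) → ℤ)
    (ha : ∀ i, a i = 1 ∨ a i = -1)
    (H : Matrix (ZMod (4 * n)) (ZMod (4 * n)) ℤ)
    (hH : ∀ i j, H i j = a (j - i))
    (hHad : H * H.transpose = ((4 * n : ℕ) : ℤ) • 1) :
    ∀ t : ZMod (4 * n), t ≠ 0 → t ≠ (2 * n : ZMod (4 * n)) →
      4 ∣ (Finset.univ.filter fun i : ZMod (4 * n) =>
        a i ≠ a (i + 2 * n) ∧ a (i + t) ≠ a (i + t + 2 * n)).card := by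
  intro t ht ht2
  set c : ZMod (4 * n) := 2 * (n : ZMod (4 * n)) with hc
  have hcc : c + c = 0 := by
    have h4 : ((4 * n : ℕ) : ZMod (4 * n)) = 0 := ZMod.natCast_self _
    push_cast at h4
    rw [hc]; linear_combination h4
  have hcne : c ≠ 0 := by
    rw [hc]
    have : ((2 * n : ℕ) : ZMod (4 * n)) = 2 * (n : ZMod (4 * n)) := by push_cast; ring
    rw [← this]
    intro h
    have hd := (ZMod.natCast_eq_zero_iff _ _).mp h
    have hn : 0 < n := Nat.pos_of_ne_zero (NeZero.ne n)
    have := Nat.le_of_dvd (by omega) hd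
    omega
  -- orthogonality of rows
  have orth : ∀ s : ZMod (4 * n), s ≠ 0 → ∑ k : ZMod (4 * n), a k * a (k + s) = 0 := by
    intro s hs
    have h := congrFun (congrFun hHad 0) (-s)
    rw [Matrix.mul_apply] at h
    simp only [Matrix.transpose_apply, hH, sub_zero, sub_neg_eq_add] at h
    rw [h]
    have h0 : (0 : ZMod (4 * n)) ≠ -s := by
      intro h'; exact hs (by rw [← neg_neg s, ← h', neg_zero])
    simp [Matrix.smul_apply, Matrix.one_apply, h0]
  -- the four correlations
  have e1 : ∑ i : ZMod (4 * n), a i * a (i + t) = 0 := orth t ht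
  have e2 : ∑ i : ZMod (4 * n), a i * a (i + t + c) = 0 := by
    have htc : t + c ≠ 0 := by
      intro h
      exact ht2 (by linear_combination h - hcc)
    have := orth (t + c) htc
    simpa [← add_assoc] using this
  have e3 : ∑ i : ZMod (4 * n), a (i + c) * a (i + t) = 0 := by
    have := orth (t - c) (sub_ne_zero.mpr (by rw [hc] at *; exact ht2))
    calc ∑ i : ZMod (4 * n), a (i + c) * a (i + t)
        = ∑ i : ZMod (4 * n), a i * a (i + (t - c)) := by
          refine Fintype.sum_equiv (Equiv.addRight c) _ _ fun i => ?_
          have h1 : (Equiv.addRight c) i = i + c := rfl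
          rw [h1]
          congr 2
          ring
      _ = 0 := this
  have e4 : ∑ i : ZMod (4 * n), a (i + c) * a (i + t + c) = 0 := by
    calc ∑ i : ZMod (4 * n), a (i + c) * a (i + t + c)
        = ∑ i : ZMod (4 * n), a i * a (i + t) := by
          refine Fintype.sum_equiv (Equiv.addRight c) _ _ fun i => ?_
          have h1 : (Equiv.addRight c) i = i + c := rfl
          rw [h1]
          congr 2
          ring
      _ = 0 := e1
  have key : ∑ i : ZMod (4 * n), (a i - a (i + c)) * (a (i + t) - a (i + t + c)) = 0 := by
    have expand : ∀ i : ZMod (4 * n), (a i - a (i + c)) * (a (i + t) - a (i + t + c)) =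
        a i * a (i + t) - a i * a (i + t + c) - a (i + c) * a (i + t)
          + a (i + c) * a (i + t + c) := fun i => by ring
    simp_rw [expand, Finset.sum_add_distrib, Finset.sum_sub_distrib, e1, e2, e3, e4]
    ring
  -- restrict to the odd-block set
  set O : Finset (ZMod (4 * n)) := Finset.univ.filter fun i =>
    a i ≠ a (i + c) ∧ a (i + t) ≠ a (i + t + c) with hO
  have keyO : ∑ i ∈ O, a i * a (i + t) = 0 := by
    have h4 : (4 : ℤ) * ∑ i ∈ O, a i * a (i + t) = 0 := by
      rw [Finset.mul_sum]
      calc ∑ i ∈ O, 4 * (a i * a (i + t))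
          = ∑ i : ZMod (4 * n), if a i ≠ a (i + c) ∧ a (i + t) ≠ a (i + t + c)
              then 4 * (a i * a (i + t)) else 0 := by
            rw [hO, Finset.sum_filter]
        _ = ∑ i : ZMod (4 * n), (a i - a (i + c)) * (a (i + t) - a (i + t + c)) := by
            refine Finset.sum_congr rfl fun i _ => ?_
            rw [quad_eval _ _ _ _ (ha i) (ha _) (ha _) (ha _)]
        _ = 0 := key
    have := mul_eq_zero.mp h4
    simpa using this
  -- split by the sign of a i * a (i + t)
  set O1 : Finset (ZMod (4 * n)) := O.filter (fun i => a i * a (i + t) = 1) with hO1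
  set O2 : Finset (ZMod (4 * n)) := O.filter (fun i => ¬ a i * a (i + t) = 1) with hO2
  have hpm : ∀ i, a i * a (i + t) = 1 ∨ a i * a (i + t) = -1 := by
    intro i
    rcases ha i with h1 | h1 <;> rcases ha (i + t) with h2 | h2 <;> rw [h1, h2] <;> norm_num
  have hsum1 : ∑ i ∈ O1, a i * a (i + t) = (O1.card : ℤ) := by
    rw [Finset.sum_congr rfl (fun i hi => (Finset.mem_filter.mp hi).2)]
    simp [hO1]
  have hsum2 : ∑ i ∈ O2, a i * a (i + t) = -(O2.card : ℤ) := by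
    have hval : ∀ i ∈ O2, a i * a (i + t) = -1 := by
      intro i hi
      rcases hpm i with h | h
      · exact absurd h (Finset.mem_filter.mp hi).2
      · exact h
    rw [Finset.sum_congr rfl hval]
    simp
  have hcards : (O1.card : ℤ) = (O2.card : ℤ) := by
    have h := Finset.sum_filter_add_sum_filter_not O (fun i => a i * a (i + t) = 1)
      (fun i => a i * a (i + t))
    beta_reduce at h
    rw [← hO1, ← hO2, hsum1, hsum2, keyO] at h
    linarith
  have hOcard : O.card = 2 * O1.card := by
    have h12 : O1.card = O2.card := by exact_mod_cast hcards
    have h := Finset.card_filter_add_card_filter_not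
      (s := O) (p := fun i => a i * a (i + t) = 1)
    beta_reduce at h
    rw [← hO1, ← hO2] at h
    omega
  -- O1 is invariant under the fixed-point-free involution i ↦ i + c
  have hmemO1 : ∀ i, i ∈ O1 ↔
      (a i ≠ a (i + c) ∧ a (i + t) ≠ a (i + t + c)) ∧ a i * a (i + t) = 1 := by
    intro i
    simp [hO1, hO, Finset.mem_filter, and_assoc]
  have hEven : Even O1.card := by
    refine even_card_of_invol (fun i => i + c) O1 ?_ ?_ ?_
    · intro i hi
      obtain ⟨⟨h1, h2⟩, h3⟩ := (hmemO1 i).mp hi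
      have ha1 : a (i + c) = -a i := neg_of_ne_pm (ha i) (ha _) h1
      have ha2 : a (i + t + c) = -a (i + t) := neg_of_ne_pm (ha _) (ha _) h2
      refine (hmemO1 (i + c)).mpr ⟨⟨?_, ?_⟩, ?_⟩
      · have hii : i + c + c = i := by rw [add_assoc, hcc, add_zero]
        rw [hii, ha1]
        intro h
        rcases ha i with h' | h' <;> rw [h'] at h <;> norm_num at h
      · have hi1 : i + c + t = i + t + c := by ring
        have hi2 : i + t + c + c = i + t := by
          rw [add_assoc, hcc, add_zero]
        rw [hi1, hi2, ha2]
        intro h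
        rcases ha (i + t) with h' | h' <;> rw [h'] at h <;> norm_num at h
      · have hi1 : i + c + t = i + t + c := by ring
        rw [hi1, ha1, ha2]
        linear_combination h3
    · intro i _
      show i + c + c = i
      rw [add_assoc, hcc, add_zero]
    · intro i _
      show i + c ≠ i
      intro h
      exact hcne (by linear_combination h)
  obtain ⟨m, hm⟩ := hEven
  exact ⟨m, by omega⟩
end

section
/- There exists a Hadamard group matrix over the non-abelian group ℍ × C₂, where ℍ is the quaternion group of order 8: there exists f : QuaternionGroup 2 × ZMod 2 → ℤ taking only the values 1 and −1 such that the matrix M indexed by QuaternionGroup 2 × ZMod 2 with M g h = f (g⁻¹ * h) satisfies M * Mᵀ = (16 : ℤ) • 1. -/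
open Matrix

def fHad : QuaternionGroup 2 × ZMod 2 → ℤ := fun p =>
  match p with
  | (QuaternionGroup.a i, c) =>
      if (c = 0 ∧ (i = 0 ∨ i = 2)) ∨ (c = 1 ∧ (i = 0 ∨ i = 1)) then 1 else -1
  | (QuaternionGroup.xa i, c) =>
      if c = 0 ∧ (i = 0 ∨ i = 1) then 1 else -1

/-- There exists a Hadamard group matrix over the non-abelian group `ℍ × C₂`, where
`ℍ = QuaternionGroup 2` is the quaternion group of order `8`. The group matrix of
`f` has entry `f (g⁻¹ * h)` at `(g, h)` (the second, cyclic, factor written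
additively). -/
theorem exists_hadamard_group_matrix_quaternion_C2 :
    ∃ f : QuaternionGroup 2 × ZMod 2 → ℤ, (∀ g, f g = 1 ∨ f g = -1) ∧
      ∃ M : Matrix (QuaternionGroup 2 × ZMod 2) (QuaternionGroup 2 × ZMod 2) ℤ,
        (∀ g h, M g h = f (g.1⁻¹ * h.1, h.2 - g.2)) ∧
          M * M.transpose = (16 : ℤ) • 1 := by
  refine ⟨fHad, by decide, fun g h => fHad (g.1⁻¹ * h.1, h.2 - g.2), fun g h => rfl, ?_⟩
  decide
end

section
/- For every natural number t there exists a Hadamard group matrix over the abelian group C₂ × C₈ × C₄ᵗ: there exists f : ZMod 2 × ZMod 8 × (Fin t → ZMod 4) → ℤ taking only the values 1 and −1 such that the matrix M indexed by this group with M g h = f (h − g) satisfies M * Mᵀ = ((16 * 4 ^ t : ℕ) : ℤ) • 1. -/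
open Matrix

/-- A perfect ±1 function on `C₂ × C₈`. -/
def f0 : ZMod 2 × ZMod 8 → ℤ := fun p =>
  if p.1 = 0 then (if p.2 = 6 ∨ p.2 = 7 then -1 else 1)
  else (if p.2 = 1 ∨ p.2 = 3 ∨ p.2 = 5 ∨ p.2 = 6 then -1 else 1)

/-- A perfect ±1 function on `C₄`. -/
def f1 : ZMod 4 → ℤ := fun x => if x = 3 then -1 else 1

lemma f0_corr : ∀ d : ZMod 2 × ZMod 8,
    (∑ k : ZMod 2 × ZMod 8, f0 k * f0 (k + d)) = if d = 0 then 16 else 0 := by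
  decide

lemma f1_corr : ∀ d : ZMod 4,
    (∑ k : ZMod 4, f1 k * f1 (k + d)) = if d = 0 then 4 else 0 := by
  decide

lemma f0_pm : ∀ g, f0 g = 1 ∨ f0 g = -1 := by decide

lemma f1_pm : ∀ g, f1 g = 1 ∨ f1 g = -1 := by decide

lemma prod_pm {ι : Type*} [DecidableEq ι] (s : Finset ι) (F : ι → ℤ) (h : ∀ i, F i = 1 ∨ F i = -1) :
    (∏ i ∈ s, F i) = 1 ∨ (∏ i ∈ s, F i) = -1 := by
  induction s using Finset.induction with
  | empty => left; simp
  | @insert a s ha ih =>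
    rw [Finset.prod_insert ha]
    rcases h a with h1 | h1 <;> rcases ih with h2 | h2 <;> simp [h1, h2]

/-- For every `t` there exists a Hadamard group matrix over the abelian group
`C₂ × C₈ × C₄ᵗ`, of order `16 * 4 ^ t`. -/
theorem exists_hadamard_group_matrix_C2_C8_C4_pow (t : ℕ) :
    ∃ f : ZMod 2 × ZMod 8 × (Fin t → ZMod 4) → ℤ, (∀ g, f g = 1 ∨ f g = -1) ∧
      ∃ M : Matrix (ZMod 2 × ZMod 8 × (Fin t → ZMod 4))
          (ZMod 2 × ZMod 8 × (Fin t → ZMod 4)) ℤ,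
        (∀ g h, M g h = f (h - g)) ∧
          M * M.transpose = ((16 * 4 ^ t : ℕ) : ℤ) • 1 := by
  refine ⟨fun g => f0 (g.1, g.2.1) * ∏ i, f1 (g.2.2 i), ?_, ?_⟩
  · intro g
    rcases f0_pm (g.1, g.2.1) with h0 | h0 <;>
      rcases prod_pm Finset.univ (fun i => f1 (g.2.2 i)) (fun i => f1_pm _) with h1 | h1 <;>
      simp [h0, h1]
  · -- key correlation lemma
    have key : ∀ d : (ZMod 2 × ZMod 8 × (Fin t → ZMod 4)), (∑ k : (ZMod 2 × ZMod 8 × (Fin t → ZMod 4)),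
        (f0 (k.1, k.2.1) * ∏ i, f1 (k.2.2 i)) *
        (f0 ((k + d).1, (k + d).2.1) * ∏ i, f1 ((k + d).2.2 i)))
        = if d = 0 then ((16 * 4 ^ t : ℕ) : ℤ) else 0 := by
      intro d
      obtain ⟨d1, d2, d3⟩ := d
      have hsum : (∑ k : (ZMod 2 × ZMod 8 × (Fin t → ZMod 4)),
          (f0 (k.1, k.2.1) * ∏ i, f1 (k.2.2 i)) *
          (f0 ((k + (d1, d2, d3)).1, (k + (d1, d2, d3)).2.1) *
            ∏ i, f1 ((k + (d1, d2, d3)).2.2 i)))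
          = (∑ p : ZMod 2 × ZMod 8, f0 p * f0 (p + (d1, d2)))
            * ∑ c : Fin t → ZMod 4, ∏ i, (f1 (c i) * f1 (c i + d3 i)) := by
        rw [Finset.sum_mul_sum]
        rw [show (Finset.univ : Finset (ZMod 2 × ZMod 8 × (Fin t → ZMod 4)))
            = (Finset.univ ×ˢ Finset.univ : Finset ((ZMod 2 × ZMod 8) × (Fin t → ZMod 4))).map
              (Equiv.prodAssoc _ _ _).toEmbedding from by
          simp [Finset.map_eq_image, Finset.eq_univ_iff_forall]]
        rw [Finset.sum_map, Finset.sum_product]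
        refine Finset.sum_congr rfl fun p _ => Finset.sum_congr rfl fun c _ => ?_
        obtain ⟨p1, p2⟩ := p
        simp only [Equiv.prodAssoc, Equiv.coe_fn_mk, Equiv.toEmbedding,
          Function.Embedding.coeFn_mk]
        rw [Finset.prod_mul_distrib]
        simp only [Prod.mk_add_mk, Prod.fst_add, Prod.snd_add, Pi.add_apply]
        ring
      rw [hsum]
      have hpi : (∑ c : Fin t → ZMod 4, ∏ i, (f1 (c i) * f1 (c i + d3 i)))
          = ∏ i, ∑ x : ZMod 4, f1 x * f1 (x + d3 i) := by
        rw [Finset.prod_univ_sum]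
        rw [← Fintype.piFinset_univ]
      rw [hpi, f0_corr]
      by_cases h1 : (d1, d2) = (0 : ZMod 2 × ZMod 8)
      · obtain ⟨e1, e2⟩ := Prod.mk_eq_zero.mp h1
        subst e1; subst e2
        by_cases h3 : d3 = 0
        · subst h3
          simp [f1_corr, Prod.mk_eq_zero, Finset.prod_const]
          have h4 : (∑ x : ZMod 4, f1 x * f1 x) = 4 := by decide
          rw [h4]
        · obtain ⟨j, hj⟩ : ∃ j, d3 j ≠ 0 := by
            by_contra hc; push_neg at hc; exact h3 (funext hc)
          have hz : (∏ i, ∑ x : ZMod 4, f1 x * f1 (x + d3 i)) = 0 :=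
            Finset.prod_eq_zero (Finset.mem_univ j) (by rw [f1_corr]; simp [hj])
          rw [hz]
          have hne : ((0, 0, d3) : (ZMod 2 × ZMod 8 × (Fin t → ZMod 4))) ≠ 0 := by
            simp only [ne_eq, Prod.mk_eq_zero]
            tauto
          simp [hne]
      · have hne : ((d1, d2, d3) : (ZMod 2 × ZMod 8 × (Fin t → ZMod 4))) ≠ 0 := by
          have h1' := h1
          simp only [ne_eq, Prod.mk_eq_zero] at h1' ⊢
          tauto
        rw [if_neg h1, if_neg hne, zero_mul]
    refine ⟨Matrix.of fun g h => f0 ((h - g).1, (h - g).2.1) *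
        ∏ i, f1 ((h - g).2.2 i), fun g h => rfl, ?_⟩
    ext g h
    simp only [Matrix.mul_apply, Matrix.transpose_apply, Matrix.of_apply]
    calc (∑ k : (ZMod 2 × ZMod 8 × (Fin t → ZMod 4)), (f0 ((k - g).1, (k - g).2.1) * ∏ i, f1 ((k - g).2.2 i)) *
          (f0 ((k - h).1, (k - h).2.1) * ∏ i, f1 ((k - h).2.2 i)))
        = ∑ k : (ZMod 2 × ZMod 8 × (Fin t → ZMod 4)), (f0 (k.1, k.2.1) * ∏ i, f1 (k.2.2 i)) *
          (f0 ((k + (g - h)).1, (k + (g - h)).2.1) * ∏ i, f1 ((k + (g - h)).2.2 i)) := by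
          refine Fintype.sum_equiv (Equiv.subRight g) _ _ fun k => ?_
          simp only [Equiv.subRight_apply, sub_add_sub_cancel]
      _ = if g - h = 0 then ((16 * 4 ^ t : ℕ) : ℤ) else 0 := key _
      _ = (((16 * 4 ^ t : ℕ) : ℤ) • (1 : Matrix (ZMod 2 × ZMod 8 × (Fin t → ZMod 4)) (ZMod 2 × ZMod 8 × (Fin t → ZMod 4)) ℤ)) g h := by
          by_cases hgh : g = h <;> simp [hgh, sub_eq_zero, Matrix.one_apply]
end

section
/- Let G be a finite group and f : G → ℤ a function taking only the values 1 and −1, and suppose the group matrix M indexed by G with M g h = f (g⁻¹ * h) satisfies M * Mᵀ = (|G| : ℤ) • 1 (M is Hadamard). Then |G| = 1 or there exists a positive natural number u with |G| = 4u². -/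
open Matrix

/-- If the group matrix `M g h = f (g⁻¹ * h)` of a `±1`-valued function `f` on a finite
group `G` is Hadamard, then `|G| = 1` or `|G| = 4u²` for some positive natural `u`. -/
theorem hadamard_group_matrix_card_eq_one_or_four_mul_sq
    (G : Type*) [Group G] [Fintype G] [DecidableEq G]
    (f : G → ℤ) (hf : ∀ g, f g = 1 ∨ f g = -1)
    (M : Matrix G G ℤ)
    (hM : ∀ g h, M g h = f (g⁻¹ * h))
    (hHad : M * M.transpose = ((Fintype.card G : ℕ) : ℤ) • 1) :
    Fintype.card G = 1 ∨ ∃ u : ℕ, 0 < u ∧ Fintype.card G = 4 * u ^ 2 := by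
  set n := Fintype.card G with hn
  have hnpos : 0 < n := Fintype.card_pos
  rcases eq_or_lt_of_le (show 1 ≤ n from hnpos) with h1 | h2
  · exact Or.inl h1.symm
  right
  have hMpm : ∀ g h : G, M g h = 1 ∨ M g h = -1 := fun g h => by rw [hM]; exact hf _
  -- n is even: orthogonality of two distinct rows
  obtain ⟨g, g', hgg'⟩ := Fintype.exists_pair_of_one_lt_card h2
  have hzero : ∑ k, M g k * M g' k = 0 := by
    have h := congrFun (congrFun hHad g) g'
    simpa [Matrix.mul_apply, Matrix.transpose_apply, Matrix.smul_apply, Matrix.one_apply,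
      hgg'] using h
  have hmodterm : ∀ k ∈ Finset.univ, (M g k * M g' k) % 2 = (1 : ℤ) := by
    intro k _
    rcases hMpm g k with h | h <;> rcases hMpm g' k with h' | h' <;> simp [h, h']
  have hneven : (2 : ℤ) ∣ (n : ℤ) := by
    have : (0 : ℤ) % 2 = ((n : ℤ)) % 2 := by
      rw [← hzero, Finset.sum_int_mod, Finset.sum_congr rfl hmodterm]
      simp [hn]
    exact Int.dvd_of_emod_eq_zero (by omega)
  -- row and column sums
  set s : ℤ := ∑ x, f x with hs
  have hrow : ∀ g : G, ∑ k, M g k = s := by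
    intro g
    rw [hs]
    exact Fintype.sum_equiv (Equiv.mulLeft g⁻¹) _ _ (fun k => by rw [hM]; rfl)
  have hcol : ∀ k : G, ∑ g : G, M g k = s := by
    intro k
    rw [hs]
    exact Fintype.sum_equiv ((Equiv.inv G).trans (Equiv.mulRight k)) _ _
      (fun g => by rw [hM]; rfl)
  -- total sum of entries of M * Mᵀ, two ways
  have hsum1 : ∑ g : G, ∑ h : G, (M * M.transpose) g h = (n : ℤ) * n := by
    rw [hHad]
    simp [Matrix.smul_apply, Matrix.one_apply, Finset.sum_ite_eq, hn, mul_comm]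
  have hsum2 : ∑ g : G, ∑ h : G, (M * M.transpose) g h = (n : ℤ) * (s * s) := by
    simp only [Matrix.mul_apply, Matrix.transpose_apply]
    calc ∑ g : G, ∑ h : G, ∑ k : G, M g k * M h k
        = ∑ g : G, ∑ k : G, ∑ h : G, M g k * M h k := by
          exact Finset.sum_congr rfl fun g _ => Finset.sum_comm
      _ = ∑ g : G, ∑ k : G, M g k * s := by
          simp only [← Finset.mul_sum]
          exact Finset.sum_congr rfl fun g _ => Finset.sum_congr rfl fun k _ => by rw [hcol]
      _ = ∑ g : G, s * s := by
          refine Finset.sum_congr rfl fun g _ => ?_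
          rw [← Finset.sum_mul, hrow]
      _ = (n : ℤ) * (s * s) := by simp [hn, mul_comm]
  have hss : s * s = (n : ℤ) := by
    have hne : (n : ℤ) ≠ 0 := by positivity
    have := hsum1.symm.trans hsum2
    exact (mul_left_cancel₀ hne this).symm
  -- 2 ∣ s
  have h2s : (2 : ℤ) ∣ s := by
    have : (2 : ℤ) ∣ s * s := hss ▸ hneven
    exact (Int.prime_two.dvd_mul.mp this).elim id id
  obtain ⟨t, ht⟩ := h2s
  have htne : t ≠ 0 := by
    rintro rfl
    simp [ht] at hss
    omega
  refine ⟨t.natAbs, Int.natAbs_pos.mpr htne, ?_⟩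
  have : (n : ℤ) = 4 * (t.natAbs : ℤ) ^ 2 := by
    rw [← hss, ht, sq, Int.natAbs_mul_self']
    ring
  exact_mod_cast this
end
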